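/- For all positive real numbers a, b, c there exists a constant C(a,b,c) > 0 such that for all real λ, ∫_{-∞}^{∞} exp(-a x² + b|x|) exp(-c|λ - x|) dx ≤ C(a,b,c) exp(-c|λ|). -/

import Mathlib

open Real MeasureTheory

theorem stmt_1 (a b c : ℝ) (ha : 0 < a) (hb : 0 < b) (hc : 0 < c) :
    ∃ C : ℝ, 0 < C ∧ ∀ lam : ℝ,
      ∫ x : ℝ, Real.exp (-a * x ^ 2 + b * |x|) * Real.exp (-c * |lam - x|)
        ≤ C * Real.exp (-c * |lam|) := by
  set g : ℝ → ℝ := fun x => Real.exp (-a * x ^ 2 + (b + c) * |x|) with hg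
  have hgint : Integrable g := by
    have h2 : Integrable fun x : ℝ => Real.exp ((b + c) ^ 2 / (2 * a)) *
        Real.exp (-(a / 2) * x ^ 2) :=
      (integrable_exp_neg_mul_sq (by positivity)).const_mul _
    refine h2.mono' ?_ ?_
    · exact (Continuous.rexp (by continuity)).aestronglyMeasurable
    · filter_upwards with x
      rw [Real.norm_eq_abs, abs_of_pos (Real.exp_pos _), ← Real.exp_add]
      apply Real.exp_le_exp.2
      have h3 : (b + c) * |x| - a / 2 * x ^ 2 ≤ (b + c) ^ 2 / (2 * a) := by
        rw [le_div_iff₀ (by positivity)]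
        have h4 : a ^ 2 * |x| ^ 2 = a ^ 2 * x ^ 2 := by rw [sq_abs]
        nlinarith [sq_nonneg (b + c - a * |x|), h4]
      linarith
  refine ⟨(∫ x, g x) + 1, by positivity, fun lam => ?_⟩
  have key : (∫ x : ℝ, Real.exp (-a * x ^ 2 + b * |x|) * Real.exp (-c * |lam - x|))
      ≤ ∫ x : ℝ, Real.exp (-c * |lam|) * g x := by
    refine integral_mono_of_nonneg ?_ (hgint.const_mul _) ?_
    · filter_upwards with x; positivity
    · filter_upwards with x
      rw [← Real.exp_add, ← Real.exp_add]
      apply Real.exp_le_exp.2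
      have htri : |lam| ≤ |lam - x| + |x| := by
        calc |lam| = |(lam - x) + x| := by congr 1; ring
        _ ≤ |lam - x| + |x| := abs_add_le _ _
      nlinarith [hc.le]
  rw [integral_const_mul] at key
  have hpos : 0 < Real.exp (-c * |lam|) := Real.exp_pos _
  have hnn : 0 ≤ ∫ x, g x := integral_nonneg fun x => (Real.exp_pos _).le
  nlinarith
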